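/- Let p1, p2 be polynomials in R[x1,x2,x3] such that p1·x1 − p2·x2 is divisible by x1² + x2². Then p1·x2 + p2·x1 is also divisible by x1² + x2². -/

import Mathlib

open MvPolynomial

/-- If `p1·x1 − p2·x2` is divisible by `x1² + x2²` in `ℝ[x1,x2,x3]`, then
`p1·x2 + p2·x1` is also divisible by `x1² + x2²`. -/
theorem dvd_p1x2_add_p2x1_of_dvd_p1x1_sub_p2x2 (p1 p2 : MvPolynomial (Fin 3) ℝ)
    (h : (X 0 ^ 2 + X 1 ^ 2 : MvPolynomial (Fin 3) ℝ) ∣ p1 * X 0 - p2 * X 1) :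
    (X 0 ^ 2 + X 1 ^ 2 : MvPolynomial (Fin 3) ℝ) ∣ p1 * X 1 + p2 * X 0 := by
  set q : MvPolynomial (Fin 3) ℝ := X 0 ^ 2 + X 1 ^ 2 with hq
  set T : MvPolynomial (Fin 3) ℝ := p1 * X 1 + p2 * X 0 with hT
  obtain ⟨c, hc⟩ := h
  have hx : X 0 * T = q * (X 1 * c + p2) := by
    rw [hT, hq]; linear_combination (X 1 : MvPolynomial (Fin 3) ℝ) * hc
  set e := MvPolynomial.finSuccEquiv ℝ 2
  set Q : Polynomial (MvPolynomial (Fin 2) ℝ) :=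
    Polynomial.X ^ 2 + Polynomial.C ((X 0 : MvPolynomial (Fin 2) ℝ) ^ 2) with hQ
  have heq : e q = Q := by
    rw [hq, hQ, map_add, map_pow, map_pow, finSuccEquiv_X_zero,
      show (1 : Fin 3) = (0 : Fin 2).succ from rfl, finSuccEquiv_X_succ, Polynomial.C_pow]
  have hQm : Q.Monic := Polynomial.monic_X_pow_add_C _ (by norm_num)
  have hQdeg : Q.degree = 2 := by rw [hQ]; compute_degree!
  have hdvd : Q ∣ Polynomial.X * e T := by
    have h2 := congrArg e hx
    rw [map_mul, map_mul, finSuccEquiv_X_zero, heq] at h2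
    exact ⟨e (X 1 * c + p2), h2⟩
  set r := e T %ₘ Q with hr
  have hrdeg : r.degree < 2 := hQdeg ▸ Polynomial.degree_modByMonic_lt _ hQm
  have hdvdr : Q ∣ Polynomial.X * r := by
    have h1 : Polynomial.X * e T - Polynomial.X * r = Q * (Polynomial.X * (e T /ₘ Q)) := by
      have h3 := Polynomial.modByMonic_add_div (e T) Q
      linear_combination (Polynomial.X : Polynomial (MvPolynomial (Fin 2) ℝ)) * h3.symm
    exact (dvd_sub_right hdvd).mp ⟨_, h1⟩
  set a := r.coeff 1 with ha'
  set b := r.coeff 0 with hb'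
  have hre : r = Polynomial.C a * Polynomial.X + Polynomial.C b :=
    Polynomial.eq_X_add_C_of_degree_le_one (Order.le_of_lt_succ (by exact_mod_cast hrdeg))
  have hdvdf : Q ∣ Polynomial.C b * Polynomial.X -
      Polynomial.C a * Polynomial.C ((X 0 : MvPolynomial (Fin 2) ℝ) ^ 2) := by
    obtain ⟨d, hd⟩ := hdvdr
    refine ⟨d - Polynomial.C a, ?_⟩
    rw [hre] at hd
    rw [hQ] at hd ⊢
    linear_combination hd
  have hf0 : Polynomial.C b * Polynomial.X -
      Polynomial.C a * Polynomial.C ((X 0 : MvPolynomial (Fin 2) ℝ) ^ 2) = 0 := by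
    apply Polynomial.eq_zero_of_dvd_of_degree_lt hdvdf
    rw [hQdeg]
    refine lt_of_le_of_lt (Polynomial.degree_sub_le _ _) (max_lt ?_ ?_)
    · exact lt_of_le_of_lt (Polynomial.degree_C_mul_X_le _) (by decide)
    · rw [← Polynomial.C_mul]
      exact lt_of_le_of_lt Polynomial.degree_C_le (by decide)
  have h1 : Polynomial.C b * Polynomial.X
      = Polynomial.C (a * (X 0 : MvPolynomial (Fin 2) ℝ) ^ 2) := by
    rw [Polynomial.C_mul]; linear_combination hf0
  have hb : b = 0 := by
    have h2 := congrArg (fun p => Polynomial.coeff p 1) h1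
    simpa only [Polynomial.coeff_C_mul, Polynomial.coeff_X_one, mul_one, Polynomial.coeff_C,
      if_neg (one_ne_zero)] using h2
  have ha : a = 0 := by
    have h2 := congrArg (fun p => Polynomial.coeff p 0) h1
    simp only [Polynomial.coeff_C_mul, Polynomial.coeff_X_zero, mul_zero,
      Polynomial.coeff_C, if_pos rfl] at h2
    rcases mul_eq_zero.mp h2.symm with h' | h'
    · exact h'
    · exact absurd h' (pow_ne_zero _ (MvPolynomial.X_ne_zero _))
  have hr0 : r = 0 := by rw [hre, ha, hb]; simp
  have hQT : Q ∣ e T := by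
    have h3 := Polynomial.modByMonic_add_div (e T) Q
    rw [← hr, hr0, zero_add] at h3
    exact ⟨_, h3.symm⟩
  obtain ⟨d, hd⟩ := hQT
  refine ⟨e.symm d, ?_⟩
  apply e.injective
  rw [map_mul, heq, AlgEquiv.apply_symm_apply]
  exact hd
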